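/- Let A be a nonempty family of k-element subsets of [n] with 1 ≤ log₂ |A| < n. Then the number of unordered pairs {x,y} ⊆ A with |x Δ y| = 2 is at most n · ℓ' · |A|, where ℓ' = min{ ⌈ log₂|A| / (log₂ n − log₂ log₂ |A|) ⌉, ⌊log₂ |A|⌋ }. -/

import Mathlib

open Finset

private def kwD (A : Finset (Finset ℕ)) : Finset (Finset ℕ × Finset ℕ) :=
  (A ×ˢ A).filter fun p => (symmDiff p.1 p.2).card = 2

private def kwdeg (A : Finset (Finset ℕ)) (x : Finset ℕ) : ℕ :=
  (A.filter fun y => (symmDiff x y).card = 2).card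

private lemma kw_symmDiff_card (y z : Finset ℕ) :
    (symmDiff y z).card = (y \ z).card + (z \ y).card := by
  rw [symmDiff_def, sup_eq_union]
  exact Finset.card_union_of_disjoint disjoint_sdiff_sdiff

private lemma kw_sd_split {y z : Finset ℕ} (hc : y.card = z.card)
    (h2 : (symmDiff y z).card = 2) : (y \ z).card = 1 ∧ (z \ y).card = 1 := by
  have h1 := Finset.card_sdiff_add_card_inter y z
  have h1' := Finset.card_sdiff_add_card_inter z y
  rw [Finset.inter_comm] at h1'
  rw [kw_symmDiff_card] at h2
  omega

private lemma kw_sd_ne {y z : Finset ℕ} (h2 : (symmDiff y z).card = 2) : y ≠ z := by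
  rintro rfl
  simp [symmDiff_self] at h2

private lemma kw_recover {y z : Finset ℕ} {a b : ℕ} (h1 : y \ z = {a}) (h2 : z \ y = {b}) :
    z = (y \ {a}) ∪ {b} := by
  ext t
  have e1 := Finset.ext_iff.mp h1 t
  have e2 := Finset.ext_iff.mp h2 t
  simp only [Finset.mem_sdiff, Finset.mem_singleton, Finset.mem_union] at *
  by_cases hty : t ∈ y <;> by_cases htz : t ∈ z <;> tauto

/-- If every member of `C` contains `i`, `i ∉ z`, and all members have the same card as `z`,
then the number of Johnson-neighbours of `z` inside `C` is at most `z.card`. -/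
private lemma kw_cross1 {C : Finset (Finset ℕ)} {z : Finset ℕ} {i : ℕ}
    (hiz : i ∉ z) (hC : ∀ w ∈ C, i ∈ w ∧ w.card = z.card) :
    kwdeg C z ≤ z.card := by
  unfold kwdeg
  apply Finset.card_le_card_of_injOn (fun w => (z \ w).sup id)
  · intro w hw
    rw [Finset.mem_coe, Finset.mem_filter] at hw
    obtain ⟨h1, h2⟩ := kw_sd_split (hC w hw.1).2.symm hw.2
    obtain ⟨a, ha⟩ := Finset.card_eq_one.mp h1
    have : a ∈ z \ w := ha ▸ Finset.mem_singleton_self a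
    simp only [Finset.mem_coe]
    rw [ha, Finset.sup_singleton]
    exact (Finset.mem_sdiff.mp this).1
  · intro w hw w' hw' heq
    simp only [Finset.coe_filter, Set.mem_setOf_eq] at hw hw'
    obtain ⟨h1, h2⟩ := kw_sd_split (hC w hw.1).2.symm hw.2
    obtain ⟨h1', h2'⟩ := kw_sd_split (hC w' hw'.1).2.symm hw'.2
    obtain ⟨a, ha⟩ := Finset.card_eq_one.mp h1
    obtain ⟨a', ha'⟩ := Finset.card_eq_one.mp h1'
    -- w \ z = {i}
    obtain ⟨b, hb⟩ := Finset.card_eq_one.mp h2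
    obtain ⟨b', hb'⟩ := Finset.card_eq_one.mp h2'
    have hbi : b = i := by
      have : i ∈ w \ z := Finset.mem_sdiff.mpr ⟨(hC w hw.1).1, hiz⟩
      rw [hb] at this; exact (Finset.mem_singleton.mp this).symm
    have hbi' : b' = i := by
      have : i ∈ w' \ z := Finset.mem_sdiff.mpr ⟨(hC w' hw'.1).1, hiz⟩
      rw [hb'] at this; exact (Finset.mem_singleton.mp this).symm
    have haa : a = a' := by
      simpa [ha, ha', Finset.sup_singleton] using heq
    rw [kw_recover ha hb, kw_recover ha' hb', haa, hbi, hbi']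

/-- If every member of `C` omits `i`, is contained in `U`, and has the same card as `z`, and
`i ∈ z`, then the number of Johnson-neighbours of `z` inside `C` is at most `U.card`. -/
private lemma kw_cross2 {C : Finset (Finset ℕ)} {z : Finset ℕ} {i : ℕ} {U : Finset ℕ}
    (hiz : i ∈ z) (hC : ∀ w ∈ C, i ∉ w ∧ w ⊆ U ∧ w.card = z.card) :
    kwdeg C z ≤ U.card := by
  unfold kwdeg
  apply Finset.card_le_card_of_injOn (fun w => (w \ z).sup id)
  · intro w hw
    rw [Finset.mem_coe, Finset.mem_filter] at hw
    obtain ⟨h1, h2⟩ := kw_sd_split (hC w hw.1).2.2.symm hw.2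
    obtain ⟨b, hb⟩ := Finset.card_eq_one.mp h2
    have : b ∈ w \ z := hb ▸ Finset.mem_singleton_self b
    simp only [Finset.mem_coe]
    rw [hb, Finset.sup_singleton]
    exact (hC w hw.1).2.1 (Finset.mem_sdiff.mp this).1
  · intro w hw w' hw' heq
    simp only [Finset.coe_filter, Set.mem_setOf_eq] at hw hw'
    obtain ⟨h1, h2⟩ := kw_sd_split (hC w hw.1).2.2.symm hw.2
    obtain ⟨h1', h2'⟩ := kw_sd_split (hC w' hw'.1).2.2.symm hw'.2
    obtain ⟨a, ha⟩ := Finset.card_eq_one.mp h1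
    obtain ⟨a', ha'⟩ := Finset.card_eq_one.mp h1'
    obtain ⟨b, hb⟩ := Finset.card_eq_one.mp h2
    obtain ⟨b', hb'⟩ := Finset.card_eq_one.mp h2'
    have hai : a = i := by
      have : i ∈ z \ w := Finset.mem_sdiff.mpr ⟨hiz, (hC w hw.1).1⟩
      rw [ha] at this; exact (Finset.mem_singleton.mp this).symm
    have hai' : a' = i := by
      have : i ∈ z \ w' := Finset.mem_sdiff.mpr ⟨hiz, (hC w' hw'.1).1⟩
      rw [ha'] at this; exact (Finset.mem_singleton.mp this).symm
    have hbb : b = b' := by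
      simpa [hb, hb', Finset.sup_singleton] using heq
    rw [kw_recover ha hb, kw_recover ha' hb', hbb, hai, hai']

private lemma kw_deg_split (A : Finset (Finset ℕ)) (p : Finset ℕ → Prop) [DecidablePred p]
    (z : Finset ℕ) :
    kwdeg A z = kwdeg (A.filter p) z + kwdeg (A.filter fun x => ¬ p x) z := by
  unfold kwdeg
  rw [Finset.filter_comm, Finset.filter_comm (fun x => ¬ p x)]
  exact (Finset.card_filter_add_card_filter_not p).symm

private lemma kw_two_mem {A : Finset (Finset ℕ)} (hA : A.Nonempty)
    (hd : ∀ x ∈ A, 1 ≤ kwdeg A x) : ∃ x ∈ A, ∃ y ∈ A, x ≠ y := by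
  obtain ⟨x, hx⟩ := hA
  have := hd x hx
  unfold kwdeg at this
  have hpos : 0 < (A.filter fun y => (symmDiff x y).card = 2).card := by omega
  obtain ⟨y, hy⟩ := Finset.card_pos.mp hpos
  rw [Finset.mem_filter] at hy
  have hne : x ≠ y := by
    intro h; rw [h, symmDiff_self] at hy; simp at hy
  exact ⟨x, hx, y, hy.1, hne⟩

private lemma kw_split_lb (n k : ℕ) : ∀ (j : ℕ) (A : Finset (Finset ℕ)), A.Nonempty →
    (∀ x ∈ A, x ⊆ Finset.Icc 1 n ∧ x.card = k) →
    (∀ x ∈ A, j*n+1 ≤ kwdeg A x) → 2^(j+1) ≤ A.card := by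
  intro j
  induction j with
  | zero =>
    intro A hA hU hd
    obtain ⟨x, hx, y, hy, hxy⟩ := kw_two_mem hA (fun x hx => by have := hd x hx; omega)
    have := Finset.one_lt_card.mpr ⟨x, hx, y, hy, hxy⟩; simp; omega
  | succ j ih =>
    intro A hA hU hd
    obtain ⟨x, hx, y, hy, hxy⟩ := kw_two_mem hA (fun x hx => by have := hd x hx; omega)
    have hsdne : (symmDiff x y).Nonempty := by
      rw [Finset.nonempty_iff_ne_empty]
      intro h
      exact hxy (by simpa [symmDiff_eq_bot] using h)
    obtain ⟨i, hi⟩ := hsdne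
    rw [Finset.mem_symmDiff] at hi
    set A₁ := A.filter (fun s => i ∈ s) with hA₁
    set A₀ := A.filter (fun s => i ∉ s) with hA₀
    have hU1 : ∀ x ∈ A₁, x ⊆ Finset.Icc 1 n ∧ x.card = k := fun x hx =>
      hU x (Finset.mem_filter.mp hx).1
    have hU0 : ∀ x ∈ A₀, x ⊆ Finset.Icc 1 n ∧ x.card = k := fun x hx =>
      hU x (Finset.mem_filter.mp hx).1
    have hIcc : (Finset.Icc 1 n).card = n := by rw [Nat.card_Icc]; omega
    have hsplit : ∀ z ∈ A, kwdeg A z = kwdeg A₁ z + kwdeg A₀ z := fun z _ =>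
      kw_deg_split A (fun s => i ∈ s) z
    -- degrees in parts
    have hd0 : ∀ z ∈ A₀, j*n+1 ≤ kwdeg A₀ z := by
      intro z hz
      rw [Finset.mem_filter] at hz
      have hc1 : kwdeg A₁ z ≤ n := by
        calc kwdeg A₁ z ≤ z.card := kw_cross1 hz.2 (fun w hw => by
          rw [hA₁, Finset.mem_filter] at hw
          exact ⟨hw.2, by rw [(hU w hw.1).2, (hU z hz.1).2]⟩)
        _ ≤ n := by
          calc z.card ≤ (Finset.Icc 1 n).card := Finset.card_le_card (hU z hz.1).1
          _ = n := hIcc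
      have := hd z hz.1
      rw [hsplit z hz.1] at this
      have hmul : (j+1)*n = j*n + n := by ring
      omega
    have hd1 : ∀ z ∈ A₁, j*n+1 ≤ kwdeg A₁ z := by
      intro z hz
      rw [Finset.mem_filter] at hz
      have hc0 : kwdeg A₀ z ≤ n := by
        calc kwdeg A₀ z ≤ (Finset.Icc 1 n).card := kw_cross2 hz.2 (fun w hw => by
          rw [hA₀, Finset.mem_filter] at hw
          exact ⟨hw.2, (hU w hw.1).1, by rw [(hU w hw.1).2, (hU z hz.1).2]⟩)
        _ = n := hIcc
      have := hd z hz.1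
      rw [hsplit z hz.1] at this
      have hmul : (j+1)*n = j*n + n := by ring
      omega
    have hne0 : A₀.Nonempty := by
      rcases hi with ⟨hix, hiy⟩ | ⟨hiy, hix⟩
      · exact ⟨y, Finset.mem_filter.mpr ⟨hy, hiy⟩⟩
      · exact ⟨x, Finset.mem_filter.mpr ⟨hx, hix⟩⟩
    have hne1 : A₁.Nonempty := by
      rcases hi with ⟨hix, hiy⟩ | ⟨hiy, hix⟩
      · exact ⟨x, Finset.mem_filter.mpr ⟨hx, hix⟩⟩
      · exact ⟨y, Finset.mem_filter.mpr ⟨hy, hiy⟩⟩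
    have h0 := ih A₀ hne0 hU0 hd0
    have h1 := ih A₁ hne1 hU1 hd1
    have hcard : A₁.card + A₀.card = A.card :=
      Finset.card_filter_add_card_filter_not (fun s => i ∈ s)
    have : 2^(j+1+1) = 2^(j+1) + 2^(j+1) := by ring
    omega

private lemma kw_D_erase (A : Finset (Finset ℕ)) (x : Finset ℕ) :
    (kwD A).card ≤ (kwD (A.erase x)).card + 2 * kwdeg A x := by
  set N := A.filter fun y => (symmDiff x y).card = 2 with hN
  have hsub : kwD A ⊆ kwD (A.erase x) ∪ ({x} ×ˢ N) ∪ (N ×ˢ {x}) := by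
    intro p hp
    unfold kwD at hp
    rw [Finset.mem_filter, Finset.mem_product] at hp
    obtain ⟨⟨h1, h2⟩, h3⟩ := hp
    rw [Finset.mem_union, Finset.mem_union]
    by_cases e1 : p.1 = x
    · refine Or.inl (Or.inr ?_)
      rw [Finset.mem_product]
      exact ⟨by simp [e1], Finset.mem_filter.mpr ⟨h2, by rw [← e1]; exact h3⟩⟩
    · by_cases e2 : p.2 = x
      · refine Or.inr ?_
        rw [Finset.mem_product]
        refine ⟨Finset.mem_filter.mpr ⟨h1, ?_⟩, by simp [e2]⟩
        rw [symmDiff_comm, ← e2]; exact h3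
      · refine Or.inl (Or.inl ?_)
        unfold kwD
        rw [Finset.mem_filter, Finset.mem_product]
        exact ⟨⟨Finset.mem_erase.mpr ⟨e1, h1⟩, Finset.mem_erase.mpr ⟨e2, h2⟩⟩, h3⟩
  calc (kwD A).card ≤ (kwD (A.erase x) ∪ ({x} ×ˢ N) ∪ (N ×ˢ {x})).card :=
        Finset.card_le_card hsub
    _ ≤ (kwD (A.erase x) ∪ ({x} ×ˢ N)).card + (N ×ˢ {x}).card := Finset.card_union_le _ _
    _ ≤ (kwD (A.erase x)).card + ({x} ×ˢ N).card + (N ×ˢ {x}).card := by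
        have := Finset.card_union_le (kwD (A.erase x)) ({x} ×ˢ N)
        omega
    _ = (kwD (A.erase x)).card + 2 * kwdeg A x := by
        rw [Finset.card_product, Finset.card_product]
        simp [kwdeg, hN]
        ring

private lemma kw_extract (c : ℕ) : ∀ (M : ℕ) (A : Finset (Finset ℕ)), A.card ≤ M →
    2*c*A.card < (kwD A).card →
    ∃ B, B ⊆ A ∧ B.Nonempty ∧ ∀ x ∈ B, c+1 ≤ kwdeg B x := by
  intro M
  induction M with
  | zero =>
    intro A hM hD
    have hA0 : A = ∅ := Finset.card_eq_zero.mp (by omega)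
    rw [hA0] at hD
    simp [kwD] at hD
  | succ M ih =>
    intro A hM hD
    by_cases hex : ∃ x ∈ A, kwdeg A x ≤ c
    · obtain ⟨x, hx, hdx⟩ := hex
      have hcard : (A.erase x).card = A.card - 1 := Finset.card_erase_of_mem hx
      have hcpos : 1 ≤ A.card := Finset.card_pos.mpr ⟨x, hx⟩
      have hDe := kw_D_erase A x
      have hmul : 2*c*A.card = 2*c*(A.erase x).card + 2*c := by
        have : A.card = (A.erase x).card + 1 := by omega
        rw [this]; ring
      obtain ⟨B, hB1, hB2, hB3⟩ := ih (A.erase x) (by omega) (by omega)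
      exact ⟨B, hB1.trans (Finset.erase_subset x A), hB2, hB3⟩
    · push_neg at hex
      have hne : A.Nonempty := by
        by_contra h
        rw [Finset.not_nonempty_iff_eq_empty.mp h] at hD
        simp [kwD] at hD
      exact ⟨A, Finset.Subset.refl A, hne, fun x hx => hex x hx⟩

private def kwR (n : ℕ) (B : Finset (Finset ℕ)) (x₀ : Finset ℕ) (j : ℕ) :
    Finset (Finset ℕ × Finset ℕ) :=
  ((x₀.powersetCard j) ×ˢ ((Finset.Icc 1 n \ x₀).powersetCard j)).filter
    fun PQ => (x₀ \ PQ.1) ∪ PQ.2 ∈ B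

private def kwGood (x₀ : Finset ℕ) (B : Finset (Finset ℕ)) (PQ : Finset ℕ × Finset ℕ) :
    Finset (Finset ℕ) :=
  B.filter fun z => (symmDiff ((x₀ \ PQ.1) ∪ PQ.2) z).card = 2 ∧
    ((x₀ \ PQ.1) ∪ PQ.2) \ z ⊆ x₀ ∧ (z \ ((x₀ \ PQ.1) ∪ PQ.2)) ∩ x₀ = ∅

private lemma kw_res {x₀ P Q : Finset ℕ} (hP : P ⊆ x₀) (hQx : ∀ t ∈ Q, t ∉ x₀) :
    x₀ \ ((x₀ \ P) ∪ Q) = P ∧ ((x₀ \ P) ∪ Q) \ x₀ = Q := by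
  constructor <;> ext t <;>
    simp only [Finset.mem_sdiff, Finset.mem_union] <;>
    [skip; skip] <;>
    · constructor
      · intro h; by_cases htQ : t ∈ Q
        · first | tauto | (exact absurd (hQx t htQ) (by tauto))
        · first | tauto | (exact absurd (hP (by tauto)) (by tauto))
      · intro h
        have h1 : t ∈ Q → t ∉ x₀ := hQx t
        have h2 : t ∈ P → t ∈ x₀ := fun ht => hP ht
        tauto

private lemma kw_master {n k j : ℕ} {B : Finset (Finset ℕ)} {x₀ P Q z : Finset ℕ}
    (hU : ∀ x ∈ B, x ⊆ Finset.Icc 1 n ∧ x.card = k)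
    (hPQ : (P, Q) ∈ kwR n B x₀ j) (hz : z ∈ kwGood x₀ B (P, Q)) :
    ∃ a b : ℕ,
      x₀ \ z = insert a P ∧ z \ x₀ = insert b Q ∧ a ∉ P ∧ b ∉ Q ∧
      a ∈ x₀ ∧ b ∈ Finset.Icc 1 n ∧ b ∉ x₀ ∧
      (x₀ \ z, z \ x₀) ∈ kwR n B x₀ (j+1) ∧
      z = (x₀ \ (x₀ \ z)) ∪ (z \ x₀) := by
  unfold kwR at hPQ
  rw [Finset.mem_filter, Finset.mem_product] at hPQ
  obtain ⟨⟨hPmem, hQmem⟩, hyB⟩ := hPQ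
  rw [Finset.mem_powersetCard] at hPmem hQmem
  obtain ⟨hPx, hPc⟩ := hPmem
  obtain ⟨hQI, hQc⟩ := hQmem
  have hQx : ∀ t ∈ Q, t ∉ x₀ := fun t ht => (Finset.mem_sdiff.mp (hQI ht)).2
  have hQIcc : ∀ t ∈ Q, t ∈ Finset.Icc 1 n := fun t ht => (Finset.mem_sdiff.mp (hQI ht)).1
  set y := (x₀ \ P) ∪ Q with hy
  obtain ⟨hres1, hres2⟩ := kw_res hPx hQx
  unfold kwGood at hz
  rw [Finset.mem_filter] at hz
  obtain ⟨hzB, hsd, hcond1, hcond2⟩ := hz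
  have hyc := (hU y hyB).2
  have hzc := (hU z hzB).2
  have hzI := (hU z hzB).1
  obtain ⟨hyz1, hzy1⟩ := kw_sd_split (hyc.trans hzc.symm) hsd
  obtain ⟨a, ha⟩ := Finset.card_eq_one.mp hyz1
  obtain ⟨b, hb⟩ := Finset.card_eq_one.mp hzy1
  have hay : a ∈ y ∧ a ∉ z := by
    have : a ∈ y \ z := ha ▸ Finset.mem_singleton_self a
    exact Finset.mem_sdiff.mp this
  have hbz : b ∈ z ∧ b ∉ y := by
    have : b ∈ z \ y := hb ▸ Finset.mem_singleton_self b
    exact Finset.mem_sdiff.mp this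
  have hax : a ∈ x₀ := hcond1 (ha ▸ Finset.mem_singleton_self a)
  have hbx : b ∉ x₀ := by
    intro hbx
    have : b ∈ (z \ y) ∩ x₀ := Finset.mem_inter.mpr ⟨hb ▸ Finset.mem_singleton_self b, hbx⟩
    rw [hcond2] at this; exact absurd this (Finset.notMem_empty b)
  have haP : a ∉ P := by
    intro haP
    have : a ∉ y := by
      rw [hy]; simp only [Finset.mem_union, Finset.mem_sdiff]
      push_neg
      exact ⟨fun _ => haP, fun hq => absurd hax (hQx a hq)⟩
    exact this hay.1
  have hbQ : b ∉ Q := fun hbQ => hbz.2 (by rw [hy]; exact Finset.mem_union_right _ hbQ)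
  -- membership characterizations
  have hmy : ∀ t, t ∈ y ↔ ((t ∈ x₀ ∧ t ∉ P) ∨ t ∈ Q) := by
    intro t; rw [hy]; simp [Finset.mem_union, Finset.mem_sdiff]
  have hmyz : ∀ t, t ∈ y ∧ t ∉ z ↔ t = a := by
    intro t
    constructor
    · intro ht
      have : t ∈ y \ z := Finset.mem_sdiff.mpr ht
      rw [ha] at this; exact Finset.mem_singleton.mp this
    · rintro rfl; exact hay
  have hmzy : ∀ t, t ∈ z ∧ t ∉ y ↔ t = b := by
    intro t
    constructor
    · intro ht
      have : t ∈ z \ y := Finset.mem_sdiff.mpr ht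
      rw [hb] at this; exact Finset.mem_singleton.mp this
    · rintro rfl; exact hbz
  have key1 : x₀ \ z = insert a P := by
    ext t
    simp only [Finset.mem_sdiff, Finset.mem_insert]
    constructor
    · intro ⟨htx, htz⟩
      by_cases hty : t ∈ y
      · exact Or.inl ((hmyz t).mp ⟨hty, htz⟩)
      · right
        have := (hmy t).not.mp hty
        push_neg at this
        exact this.1 htx
    · rintro (rfl | htP)
      · exact ⟨hax, hay.2⟩
      · refine ⟨hPx htP, fun htz => ?_⟩
        have hty : t ∉ y := by
          intro hty
          rcases (hmy t).mp hty with ⟨_, hnp⟩ | hq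
          · exact hnp htP
          · exact hQx t hq (hPx htP)
        have : t = b := (hmzy t).mp ⟨htz, hty⟩
        exact hbx (this ▸ hPx htP)
  have key2 : z \ x₀ = insert b Q := by
    ext t
    simp only [Finset.mem_sdiff, Finset.mem_insert]
    constructor
    · intro ⟨htz, htx⟩
      by_cases hty : t ∈ y
      · right
        rcases (hmy t).mp hty with ⟨h1, _⟩ | h2
        · exact absurd h1 htx
        · exact h2
      · exact Or.inl ((hmzy t).mp ⟨htz, hty⟩)
    · rintro (rfl | htQ)
      · exact ⟨hbz.1, hbx⟩
      · refine ⟨?_, hQx t htQ⟩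
        have hty : t ∈ y := (hmy t).mpr (Or.inr htQ)
        by_contra htz
        exact hQx t htQ (((hmyz t).mp ⟨hty, htz⟩) ▸ hax)
  have hzeq : z = (x₀ \ (x₀ \ z)) ∪ (z \ x₀) := by
    ext t
    simp only [Finset.mem_sdiff, Finset.mem_union]
    tauto
  refine ⟨a, b, key1, key2, haP, hbQ, hax, ?_, hbx, ?_, hzeq⟩
  · have : b ∈ z := hbz.1
    exact hzI this
  · unfold kwR
    rw [Finset.mem_filter, Finset.mem_product]
    refine ⟨⟨?_, ?_⟩, ?_⟩
    · rw [Finset.mem_powersetCard, key1]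
      refine ⟨?_, ?_⟩
      · intro t ht
        rcases Finset.mem_insert.mp ht with rfl | h
        · exact hax
        · exact hPx h
      · rw [Finset.card_insert_of_notMem haP, hPc]
    · rw [Finset.mem_powersetCard, key2]
      refine ⟨?_, ?_⟩
      · intro t ht
        rcases Finset.mem_insert.mp ht with rfl | h
        · exact Finset.mem_sdiff.mpr ⟨hzI hbz.1, hbx⟩
        · exact hQI h
      · rw [Finset.card_insert_of_notMem hbQ, hQc]
    · have : x₀ \ (x₀ \ z) ∪ (z \ x₀) ∈ B := by rw [← hzeq]; exact hzB
      simpa using this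

private lemma kw_good_lb {n k d j : ℕ} {B : Finset (Finset ℕ)} {x₀ P Q : Finset ℕ}
    (hU : ∀ x ∈ B, x ⊆ Finset.Icc 1 n ∧ x.card = k)
    (hd : ∀ x ∈ B, d ≤ kwdeg B x)
    (hPQ : (P, Q) ∈ kwR n B x₀ j) :
    d - j*n ≤ (kwGood x₀ B (P, Q)).card := by
  have hPQ' := hPQ
  unfold kwR at hPQ'
  rw [Finset.mem_filter, Finset.mem_product] at hPQ'
  obtain ⟨⟨hPmem, hQmem⟩, hyB⟩ := hPQ'
  obtain ⟨hPx, hPc⟩ : P ⊆ x₀ ∧ P.card = j := by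
    simpa [Finset.mem_powersetCard] using hPmem
  obtain ⟨hQI, hQc⟩ : Q ⊆ Finset.Icc 1 n \ x₀ ∧ Q.card = j := by
    simpa [Finset.mem_powersetCard] using hQmem
  have hyB' : (x₀ \ P) ∪ Q ∈ B := hyB
  have hQx : ∀ t ∈ Q, t ∉ x₀ := fun t ht => (Finset.mem_sdiff.mp (hQI ht)).2
  obtain ⟨hres1, hres2⟩ := kw_res hPx hQx
  set y := (x₀ \ P) ∪ Q with hy
  have hyc := (hU y hyB').2
  have hyI := (hU y hyB').1
  have hkn : k ≤ n := by
    have := Finset.card_le_card hyI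
    rw [hyc, Nat.card_Icc] at this; omega
  set N := B.filter (fun z => (symmDiff y z).card = 2) with hN
  set Bad1 := N.filter (fun z => ¬ (y \ z ⊆ x₀)) with hBad1
  set Bad2 := N.filter (fun z => ¬ ((z \ y) ∩ x₀ = ∅)) with hBad2
  have hNsub : N ⊆ kwGood x₀ B (P, Q) ∪ Bad1 ∪ Bad2 := by
    intro z hz
    rw [hN, Finset.mem_filter] at hz
    rw [Finset.mem_union, Finset.mem_union]
    by_cases c1 : y \ z ⊆ x₀
    · by_cases c2 : (z \ y) ∩ x₀ = ∅
      · left; left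
        unfold kwGood
        rw [Finset.mem_filter]
        exact ⟨hz.1, hz.2, c1, c2⟩
      · right; rw [hBad2, Finset.mem_filter]
        exact ⟨Finset.mem_filter.mpr hz, c2⟩
    · left; right; rw [hBad1, Finset.mem_filter]
      exact ⟨Finset.mem_filter.mpr hz, c1⟩
  have hNcard : d ≤ N.card := hd y hyB'
  have hB1 : Bad1.card ≤ j * (n - k) := by
    have hle : Bad1.card ≤ (Q ×ˢ (Finset.Icc 1 n \ y)).card := by
      apply Finset.card_le_card_of_injOn (fun z => ((y \ z).sup id, (z \ y).sup id))
      · intro z hz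
        rw [Finset.mem_coe, hBad1, Finset.mem_filter, hN, Finset.mem_filter] at hz
        obtain ⟨⟨hzB, hsd⟩, hns⟩ := hz
        obtain ⟨h1, h2⟩ := kw_sd_split (hyc.trans ((hU z hzB).2).symm) hsd
        obtain ⟨a, ha⟩ := Finset.card_eq_one.mp h1
        obtain ⟨b, hb⟩ := Finset.card_eq_one.mp h2
        have hay : a ∈ y ∧ a ∉ z := Finset.mem_sdiff.mp (ha ▸ Finset.mem_singleton_self a)
        have hbz : b ∈ z ∧ b ∉ y := Finset.mem_sdiff.mp (hb ▸ Finset.mem_singleton_self b)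
        have hax : a ∉ x₀ := by
          intro hax
          exact hns (by rw [ha]; exact Finset.singleton_subset_iff.mpr hax)
        have haQ : a ∈ Q := by
          rw [← hres2]; exact Finset.mem_sdiff.mpr ⟨hay.1, hax⟩
        have hbI : b ∈ Finset.Icc 1 n \ y :=
          Finset.mem_sdiff.mpr ⟨(hU z hzB).1 hbz.1, hbz.2⟩
        simp only [Finset.mem_coe]
        rw [ha, hb, Finset.sup_singleton, Finset.sup_singleton, Finset.mem_product]
        exact ⟨haQ, hbI⟩
      · intro z hz z' hz' heq
        rw [Finset.mem_coe, hBad1, Finset.mem_filter, hN, Finset.mem_filter] at hz hz'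
        obtain ⟨⟨hzB, hsd⟩, -⟩ := hz
        obtain ⟨⟨hzB', hsd'⟩, -⟩ := hz'
        obtain ⟨h1, h2⟩ := kw_sd_split (hyc.trans ((hU z hzB).2).symm) hsd
        obtain ⟨h1', h2'⟩ := kw_sd_split (hyc.trans ((hU z' hzB').2).symm) hsd'
        obtain ⟨a, ha⟩ := Finset.card_eq_one.mp h1
        obtain ⟨b, hb⟩ := Finset.card_eq_one.mp h2
        obtain ⟨a', ha'⟩ := Finset.card_eq_one.mp h1'
        obtain ⟨b', hb'⟩ := Finset.card_eq_one.mp h2'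
        have hpair : a = a' ∧ b = b' := by
          simpa [ha, ha', hb, hb', Finset.sup_singleton, Prod.ext_iff] using heq
        rw [kw_recover ha hb, kw_recover ha' hb', hpair.1, hpair.2]
    have hcard : (Q ×ˢ (Finset.Icc 1 n \ y)).card = j * (n - k) := by
      rw [Finset.card_product, hQc, Finset.card_sdiff_of_subset hyI, hyc, Nat.card_Icc]
      simp
    omega
  have hB2 : Bad2.card ≤ j * k := by
    have hle : Bad2.card ≤ (P ×ˢ y).card := by
      apply Finset.card_le_card_of_injOn (fun z => ((z \ y).sup id, (y \ z).sup id))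
      · intro z hz
        rw [Finset.mem_coe, hBad2, Finset.mem_filter, hN, Finset.mem_filter] at hz
        obtain ⟨⟨hzB, hsd⟩, hns⟩ := hz
        obtain ⟨h1, h2⟩ := kw_sd_split (hyc.trans ((hU z hzB).2).symm) hsd
        obtain ⟨a, ha⟩ := Finset.card_eq_one.mp h1
        obtain ⟨b, hb⟩ := Finset.card_eq_one.mp h2
        have hay : a ∈ y ∧ a ∉ z := Finset.mem_sdiff.mp (ha ▸ Finset.mem_singleton_self a)
        have hbz : b ∈ z ∧ b ∉ y := Finset.mem_sdiff.mp (hb ▸ Finset.mem_singleton_self b)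
        have hbx : b ∈ x₀ := by
          by_contra hbx
          apply hns
          rw [hb]
          ext t
          simp only [Finset.mem_inter, Finset.mem_singleton, Finset.notMem_empty, iff_false,
            not_and]
          rintro rfl htx
          exact hbx htx
        have hbP : b ∈ P := by
          rw [← hres1]; exact Finset.mem_sdiff.mpr ⟨hbx, hbz.2⟩
        simp only [Finset.mem_coe]
        rw [ha, hb, Finset.sup_singleton, Finset.sup_singleton, Finset.mem_product]
        exact ⟨hbP, hay.1⟩
      · intro z hz z' hz' heq
        rw [Finset.mem_coe, hBad2, Finset.mem_filter, hN, Finset.mem_filter] at hz hz'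
        obtain ⟨⟨hzB, hsd⟩, -⟩ := hz
        obtain ⟨⟨hzB', hsd'⟩, -⟩ := hz'
        obtain ⟨h1, h2⟩ := kw_sd_split (hyc.trans ((hU z hzB).2).symm) hsd
        obtain ⟨h1', h2'⟩ := kw_sd_split (hyc.trans ((hU z' hzB').2).symm) hsd'
        obtain ⟨a, ha⟩ := Finset.card_eq_one.mp h1
        obtain ⟨b, hb⟩ := Finset.card_eq_one.mp h2
        obtain ⟨a', ha'⟩ := Finset.card_eq_one.mp h1'
        obtain ⟨b', hb'⟩ := Finset.card_eq_one.mp h2'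
        have hpair : b = b' ∧ a = a' := by
          simpa [ha, ha', hb, hb', Finset.sup_singleton, Prod.ext_iff] using heq
        rw [kw_recover ha hb, kw_recover ha' hb', hpair.1, hpair.2]
    have hcard : (P ×ˢ y).card = j * k := by
      rw [Finset.card_product, hPc, hyc]
    omega
  have hunion : N.card ≤ (kwGood x₀ B (P, Q)).card + Bad1.card + Bad2.card := by
    calc N.card ≤ (kwGood x₀ B (P, Q) ∪ Bad1 ∪ Bad2).card := Finset.card_le_card hNsub
      _ ≤ (kwGood x₀ B (P, Q) ∪ Bad1).card + Bad2.card := Finset.card_union_le _ _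
      _ ≤ (kwGood x₀ B (P, Q)).card + Bad1.card + Bad2.card := by
          have := Finset.card_union_le (kwGood x₀ B (P, Q)) Bad1
          omega
  have hjn : j * (n - k) + j * k = j * n := by
    rw [← Nat.mul_add, Nat.sub_add_cancel hkn]
  omega

private lemma kw_insert_sdiff1 {a : ℕ} {P : Finset ℕ} (h : a ∉ P) :
    insert a P \ P = {a} := by
  ext t
  simp only [Finset.mem_sdiff, Finset.mem_insert, Finset.mem_singleton]
  constructor
  · rintro ⟨rfl | htP, hnp⟩
    · rfl
    · exact absurd htP hnp
  · rintro rfl; exact ⟨Or.inl rfl, h⟩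

private lemma kw_insert_sdiff2 {a : ℕ} {P : Finset ℕ} (h : a ∉ P) :
    insert a P \ {a} = P := by
  ext t
  simp only [Finset.mem_sdiff, Finset.mem_insert, Finset.mem_singleton]
  constructor
  · rintro ⟨rfl | htP, hna⟩
    · exact absurd rfl hna
    · exact htP
  · intro htP
    exact ⟨Or.inr htP, fun he => h (he ▸ htP)⟩

private lemma kw_step {n k d : ℕ} {B : Finset (Finset ℕ)} {x₀ : Finset ℕ}
    (hU : ∀ x ∈ B, x ⊆ Finset.Icc 1 n ∧ x.card = k)
    (hd : ∀ x ∈ B, d ≤ kwdeg B x) (j : ℕ) :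
    (kwR n B x₀ j).card * (d - j*n) ≤ (j+1)^2 * (kwR n B x₀ (j+1)).card := by
  classical
  set S := (kwR n B x₀ j).sigma (fun PQ => kwGood x₀ B PQ) with hS
  have h1 : (kwR n B x₀ j).card * (d - j*n) ≤ S.card := by
    rw [hS, Finset.card_sigma]
    have := Finset.card_nsmul_le_sum (kwR n B x₀ j)
      (fun PQ => (kwGood x₀ B PQ).card) (d - j*n)
      (fun PQ hPQ => by
        obtain ⟨P, Q⟩ := PQ
        exact kw_good_lb hU hd hPQ)
    simpa [smul_eq_mul] using this
  set f : ((_ : Finset ℕ × Finset ℕ) × Finset ℕ) → Finset ℕ × Finset ℕ :=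
    fun t => (x₀ \ t.2, t.2 \ x₀) with hf
  have hmapsto : ∀ t ∈ S, f t ∈ kwR n B x₀ (j+1) := by
    rintro ⟨⟨P, Q⟩, z⟩ ht
    rw [hS, Finset.mem_sigma] at ht
    obtain ⟨a, b, -, -, -, -, -, -, -, hmem, -⟩ := kw_master hU ht.1 ht.2
    exact hmem
  have h3 : S.card ≤ (j+1)^2 * ((S.image f).card) := by
    apply Finset.card_le_mul_card_image
    intro w hw
    obtain ⟨t₀, ht₀S, ht₀⟩ := Finset.mem_image.mp hw
    have hwR : w ∈ kwR n B x₀ (j+1) := ht₀ ▸ hmapsto t₀ ht₀S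
    have hw1 : w.1.card = j+1 ∧ w.2.card = j+1 := by
      unfold kwR at hwR
      rw [Finset.mem_filter, Finset.mem_product] at hwR
      obtain ⟨⟨hp, hq⟩, -⟩ := hwR
      rw [Finset.mem_powersetCard] at hp hq
      exact ⟨hp.2, hq.2⟩
    have hinj : (S.filter (fun t => f t = w)).card ≤ (w.1 ×ˢ w.2).card := by
      apply Finset.card_le_card_of_injOn
        (fun t => ((w.1 \ t.1.1).sup id, (w.2 \ t.1.2).sup id))
      · rintro ⟨⟨P, Q⟩, z⟩ ht
        rw [Finset.mem_coe, Finset.mem_filter] at ht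
        obtain ⟨htS, htf⟩ := ht
        rw [hS, Finset.mem_sigma] at htS
        obtain ⟨a, b, key1, key2, haP, hbQ, -, -, -, -, -⟩ := kw_master hU htS.1 htS.2
        have hw1e : w.1 = x₀ \ z := by rw [← htf]
        have hw2e : w.2 = z \ x₀ := by rw [← htf]
        have e1 : w.1 \ P = {a} := by rw [hw1e, key1, kw_insert_sdiff1 haP]
        have e2 : w.2 \ Q = {b} := by rw [hw2e, key2, kw_insert_sdiff1 hbQ]
        have : ((w.1 \ P).sup id, (w.2 \ Q).sup id) = (a, b) := by
          rw [e1, e2, Finset.sup_singleton, Finset.sup_singleton]; rfl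
        simp only [Finset.mem_coe]
        rw [Finset.mem_product]
        constructor
        · show (w.1 \ P).sup id ∈ w.1
          rw [e1, Finset.sup_singleton, hw1e, key1]
          exact Finset.mem_insert_self a P
        · show (w.2 \ Q).sup id ∈ w.2
          rw [e2, Finset.sup_singleton, hw2e, key2]
          exact Finset.mem_insert_self b Q
      · rintro ⟨⟨P, Q⟩, z⟩ ht ⟨⟨P', Q'⟩, z'⟩ ht' heq
        rw [Finset.mem_coe, Finset.mem_filter] at ht ht'
        obtain ⟨htS, htf⟩ := ht
        obtain ⟨htS', htf'⟩ := ht'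
        rw [hS, Finset.mem_sigma] at htS htS'
        obtain ⟨a, b, key1, key2, haP, hbQ, -, -, -, -, hzeq⟩ := kw_master hU htS.1 htS.2
        obtain ⟨a', b', key1', key2', haP', hbQ', -, -, -, -, hzeq'⟩ :=
          kw_master hU htS'.1 htS'.2
        dsimp only at key1 key2 hzeq key1' key2' hzeq'
        have hw1e : w.1 = x₀ \ z := by rw [← htf]
        have hw2e : w.2 = z \ x₀ := by rw [← htf]
        have hw1e' : w.1 = x₀ \ z' := by rw [← htf']
        have hw2e' : w.2 = z' \ x₀ := by rw [← htf']
        have hz : z = z' := by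
          rw [hzeq, hzeq', ← hw1e, ← hw2e, ← hw1e', ← hw2e']
        have e1 : w.1 \ P = {a} := by rw [hw1e, key1, kw_insert_sdiff1 haP]
        have e2 : w.2 \ Q = {b} := by rw [hw2e, key2, kw_insert_sdiff1 hbQ]
        have e1' : w.1 \ P' = {a'} := by rw [hw1e', key1', kw_insert_sdiff1 haP']
        have e2' : w.2 \ Q' = {b'} := by rw [hw2e', key2', kw_insert_sdiff1 hbQ']
        have hab : a = a' ∧ b = b' := by
          simpa [e1, e2, e1', e2', Finset.sup_singleton, Prod.ext_iff] using heq
        have hP : P = P' := by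
          have : w.1 \ {a} = P := by rw [hw1e, key1, kw_insert_sdiff2 haP]
          have h' : w.1 \ {a'} = P' := by rw [hw1e', key1', kw_insert_sdiff2 haP']
          rw [← this, ← h', hab.1]
        have hQ : Q = Q' := by
          have : w.2 \ {b} = Q := by rw [hw2e, key2, kw_insert_sdiff2 hbQ]
          have h' : w.2 \ {b'} = Q' := by rw [hw2e', key2', kw_insert_sdiff2 hbQ']
          rw [← this, ← h', hab.2]
        subst hz; subst hP; subst hQ
        rfl
    calc (S.filter (fun t => f t = w)).card ≤ (w.1 ×ˢ w.2).card := hinj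
      _ = (j+1)^2 := by rw [Finset.card_product, hw1.1, hw1.2, sq]
  have himg : (S.image f).card ≤ (kwR n B x₀ (j+1)).card := by
    apply Finset.card_le_card
    intro w hw
    obtain ⟨t, htS, ht⟩ := Finset.mem_image.mp hw
    exact ht ▸ hmapsto t htS
  calc (kwR n B x₀ j).card * (d - j*n) ≤ S.card := h1
    _ ≤ (j+1)^2 * ((S.image f).card) := h3
    _ ≤ (j+1)^2 * (kwR n B x₀ (j+1)).card := Nat.mul_le_mul_left _ himg

private lemma kw_R_le {n j : ℕ} {B : Finset (Finset ℕ)} {x₀ : Finset ℕ} :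
    (kwR n B x₀ j).card ≤ B.card := by
  apply Finset.card_le_card_of_injOn (fun PQ => (x₀ \ PQ.1) ∪ PQ.2)
  · rintro ⟨P, Q⟩ hPQ
    unfold kwR at hPQ
    rw [Finset.mem_coe, Finset.mem_filter] at hPQ
    exact hPQ.2
  · rintro ⟨P, Q⟩ hPQ ⟨P', Q'⟩ hPQ' heq
    rw [Finset.mem_coe] at hPQ hPQ'
    unfold kwR at hPQ hPQ'
    rw [Finset.mem_filter, Finset.mem_product] at hPQ hPQ'
    obtain ⟨⟨hp, hq⟩, -⟩ := hPQ
    obtain ⟨⟨hp', hq'⟩, -⟩ := hPQ'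
    obtain ⟨hPx, -⟩ : P ⊆ x₀ ∧ P.card = j := by simpa [Finset.mem_powersetCard] using hp
    obtain ⟨hQI, -⟩ : Q ⊆ Finset.Icc 1 n \ x₀ ∧ Q.card = j := by
      simpa [Finset.mem_powersetCard] using hq
    obtain ⟨hPx', -⟩ : P' ⊆ x₀ ∧ P'.card = j := by simpa [Finset.mem_powersetCard] using hp'
    obtain ⟨hQI', -⟩ : Q' ⊆ Finset.Icc 1 n \ x₀ ∧ Q'.card = j := by
      simpa [Finset.mem_powersetCard] using hq'
    have hQx : ∀ t ∈ Q, t ∉ x₀ := fun t ht => (Finset.mem_sdiff.mp (hQI ht)).2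
    have hQx' : ∀ t ∈ Q', t ∉ x₀ := fun t ht => (Finset.mem_sdiff.mp (hQI' ht)).2
    obtain ⟨e1, e2⟩ := kw_res hPx hQx
    obtain ⟨e1', e2'⟩ := kw_res hPx' hQx'
    dsimp only at heq
    have hP : P = P' := by rw [← e1, ← e1', heq]
    have hQ : Q = Q' := by rw [← e2, ← e2', heq]
    rw [hP, hQ]

private lemma kw_chain {n k d : ℕ} {B : Finset (Finset ℕ)} {x₀ : Finset ℕ}
    (hU : ∀ x ∈ B, x ⊆ Finset.Icc 1 n ∧ x.card = k)
    (hd : ∀ x ∈ B, d ≤ kwdeg B x) (hx₀ : x₀ ∈ B) (j : ℕ) :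
    ∏ i ∈ Finset.range j, (d - i*n) ≤ (Nat.factorial j)^2 * (kwR n B x₀ j).card := by
  induction j with
  | zero =>
    have hmem : ((∅, ∅) : Finset ℕ × Finset ℕ) ∈ kwR n B x₀ 0 := by
      unfold kwR
      rw [Finset.mem_filter, Finset.mem_product]
      refine ⟨⟨?_, ?_⟩, ?_⟩
      · simp [Finset.mem_powersetCard]
      · simp [Finset.mem_powersetCard]
      · simpa using hx₀
    have : 1 ≤ (kwR n B x₀ 0).card := Finset.card_pos.mpr ⟨_, hmem⟩
    simpa using this
  | succ j ih =>
    calc ∏ i ∈ Finset.range (j+1), (d - i*n)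
        = (∏ i ∈ Finset.range j, (d - i*n)) * (d - j*n) := Finset.prod_range_succ _ _
      _ ≤ ((Nat.factorial j)^2 * (kwR n B x₀ j).card) * (d - j*n) :=
          Nat.mul_le_mul_right _ ih
      _ = (Nat.factorial j)^2 * ((kwR n B x₀ j).card * (d - j*n)) := by ring
      _ ≤ (Nat.factorial j)^2 * ((j+1)^2 * (kwR n B x₀ (j+1)).card) :=
          Nat.mul_le_mul_left _ (kw_step hU hd j)
      _ = (Nat.factorial (j+1))^2 * (kwR n B x₀ (j+1)).card := by
          rw [Nat.factorial_succ, mul_pow]; ring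

private lemma kw_count {n k d : ℕ} {B : Finset (Finset ℕ)}
    (hU : ∀ x ∈ B, x ⊆ Finset.Icc 1 n ∧ x.card = k)
    (hd : ∀ x ∈ B, d ≤ kwdeg B x) (hB : B.Nonempty) (j : ℕ) :
    ∏ i ∈ Finset.range j, (d - i*n) ≤ (Nat.factorial j)^2 * B.card := by
  obtain ⟨x₀, hx₀⟩ := hB
  calc ∏ i ∈ Finset.range j, (d - i*n) ≤ (Nat.factorial j)^2 * (kwR n B x₀ j).card :=
        kw_chain hU hd hx₀ j
    _ ≤ (Nat.factorial j)^2 * B.card := Nat.mul_le_mul_left _ kw_R_le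

private lemma kw_DtoE (A : Finset (Finset ℕ)) :
    2 * ((kwD A).image (fun p => s(p.1, p.2))).card ≤ (kwD A).card := by
  classical
  rw [Finset.card_eq_sum_card_image (fun p => s(p.1, p.2)) (kwD A)]
  have h := Finset.card_nsmul_le_sum ((kwD A).image (fun p => s(p.1, p.2)))
    (fun e => ((kwD A).filter (fun p => s(p.1, p.2) = e)).card) 2 ?_
  · rw [smul_eq_mul, mul_comm] at h
    exact h
  · intro e he
    obtain ⟨p, hp, hpe⟩ := Finset.mem_image.mp he
    have hp' := hp
    unfold kwD at hp'
    rw [Finset.mem_filter, Finset.mem_product] at hp'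
    obtain ⟨⟨h1, h2⟩, h3⟩ := hp'
    have hxy : p.1 ≠ p.2 := kw_sd_ne h3
    have hmem1 : p ∈ (kwD A).filter (fun q => s(q.1, q.2) = e) :=
      Finset.mem_filter.mpr ⟨hp, hpe⟩
    have hswap : (p.2, p.1) ∈ kwD A := by
      unfold kwD
      rw [Finset.mem_filter, Finset.mem_product]
      exact ⟨⟨h2, h1⟩, by rw [symmDiff_comm] at h3; exact h3⟩
    have hmem2 : (p.2, p.1) ∈ (kwD A).filter (fun q => s(q.1, q.2) = e) := by
      refine Finset.mem_filter.mpr ⟨hswap, ?_⟩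
      show s(p.2, p.1) = e
      rw [Sym2.eq_swap]
      exact hpe
    have hne : p ≠ (p.2, p.1) := by
      intro h
      exact hxy (by rw [Prod.ext_iff] at h; exact h.1)
    exact Finset.one_lt_card.mpr ⟨p, hmem1, (p.2, p.1), hmem2, hne⟩

private lemma kw_fact_prod : ∀ M : ℕ, ∏ i ∈ Finset.range M, (M - i) = Nat.factorial M := by
  intro M
  induction M with
  | zero => simp
  | succ M ih =>
    rw [Finset.prod_range_succ' (fun i => M + 1 - i) M]
    simp only [Nat.succ_sub_succ]
    rw [ih, Nat.sub_zero, Nat.factorial_succ]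
    ring

theorem stmt14 (n k : ℕ) (A : Finset (Finset ℕ)) (hA : A.Nonempty)
    (hsub : ∀ x ∈ A, x ⊆ Finset.Icc 1 n ∧ x.card = k)
    (h1 : 1 ≤ Real.logb 2 A.card) (h2 : Real.logb 2 A.card < n) :
    ({e : Sym2 (Finset ℕ) | ∃ x ∈ A, ∃ y ∈ A,
        e = s(x, y) ∧ (symmDiff x y).card = 2}.ncard : ℝ)
      ≤ (n : ℝ) *
        min (⌈Real.logb 2 A.card / (Real.logb 2 n - Real.logb 2 (Real.logb 2 A.card))⌉ : ℝ)
          (⌊Real.logb 2 A.card⌋ : ℝ)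
        * A.card := by
  classical
  set L := Real.logb 2 (A.card : ℝ) with hLdef
  set c : ℤ := ⌈L / (Real.logb 2 (n : ℝ) - Real.logb 2 L)⌉ with hcdef
  set fl : ℤ := ⌊L⌋ with hfldef
  set Efin := (kwD A).image (fun p => s(p.1, p.2)) with hEdef
  -- convert the set to the finset
  have hset : {e : Sym2 (Finset ℕ) | ∃ x ∈ A, ∃ y ∈ A,
      e = s(x, y) ∧ (symmDiff x y).card = 2} = (Efin : Set (Sym2 (Finset ℕ))) := by
    ext e
    simp only [Set.mem_setOf_eq, hEdef, Finset.coe_image, Set.mem_image, Finset.mem_coe]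
    constructor
    · rintro ⟨x, hx, y, hy, he, hc2⟩
      refine ⟨(x, y), ?_, he.symm⟩
      unfold kwD
      rw [Finset.mem_filter, Finset.mem_product]
      exact ⟨⟨hx, hy⟩, hc2⟩
    · rintro ⟨p, hp, hpe⟩
      unfold kwD at hp
      rw [Finset.mem_filter, Finset.mem_product] at hp
      exact ⟨p.1, hp.1.1, p.2, hp.1.2, hpe.symm, hp.2⟩
  rw [hset, Set.ncard_coe_finset]
  -- basic numeric facts
  have ha1 : 1 ≤ A.card := Finset.card_pos.mpr hA
  have ha2 : 2 ≤ A.card := by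
    by_contra h
    have : A.card = 1 := by omega
    rw [hLdef, this] at h1
    norm_num [Real.logb_one] at h1
  have ha0R : (0:ℝ) < (A.card : ℝ) := by positivity
  have haL : (2:ℝ) ^ L = (A.card : ℝ) :=
    Real.rpow_logb (by norm_num) (by norm_num) ha0R
  have hn1 : (1:ℝ) < (n:ℝ) := lt_of_le_of_lt h1 h2
  have hn2 : 2 ≤ n := by
    have : 1 < n := by exact_mod_cast hn1
    omega
  have hn0R : (0:ℝ) < (n:ℝ) := by positivity
  have hL0 : 0 < L := lt_of_lt_of_le one_pos h1
  have hdenom : 0 < Real.logb 2 (n:ℝ) - Real.logb 2 L := by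
    have := Real.logb_lt_logb (b := 2) (by norm_num) hL0 h2
    linarith
  have hc1 : 1 ≤ c := by
    have : 0 < c := Int.ceil_pos.mpr (div_pos hL0 hdenom)
    omega
  have hf1 : 1 ≤ fl := Int.le_floor.mpr (by exact_mod_cast h1)
  rcases le_total ((c:ℝ)) ((fl:ℝ)) with hmin | hmin
  · -- ceiling case
    rw [min_eq_left hmin]
    set m : ℕ := c.toNat with hmdef
    have hmZ : (m : ℤ) = c := Int.toNat_of_nonneg (by omega)
    have hmR : (m : ℝ) = (c : ℝ) := by exact_mod_cast congrArg (Int.cast : ℤ → ℝ) hmZ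
    have hm1 : 1 ≤ m := by omega
    have hLm : (m:ℝ) ≤ L := by
      rw [hmR]
      calc (c:ℝ) ≤ (fl:ℝ) := hmin
        _ ≤ L := Int.floor_le L
    have hkey : Efin.card ≤ n * m * A.card := by
      by_contra hgt
      push_neg at hgt
      have hDgt : 2 * (n*m) * A.card < (kwD A).card := by
        have hDE := kw_DtoE A
        rw [← hEdef] at hDE
        have e1 : 2 * (n*m) * A.card = 2 * (n*m*A.card) := by ring
        omega
      obtain ⟨B, hB1, hBne, hdB⟩ := kw_extract (n*m) A.card A le_rfl hDgt
      have hUB : ∀ x ∈ B, x ⊆ Finset.Icc 1 n ∧ x.card = k := fun x hx => hsub x (hB1 hx)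
      have hchain := kw_count hUB hdB hBne m
      -- lower bound the product
      have hprod1 : ∏ i ∈ Finset.range m, (n*(m-i)) = n^m * Nat.factorial m := by
        rw [Finset.prod_mul_distrib, Finset.prod_const, Finset.card_range, kw_fact_prod]
      have hlt : n^m * Nat.factorial m < ∏ i ∈ Finset.range m, (n*m+1 - i*n) := by
        rw [← hprod1]
        have hco : ∀ i ∈ Finset.range m, n*m+1-i*n = n*(m-i)+1 := by
          intro i hi
          rw [Finset.mem_range] at hi
          have e : n*(m-i) + i*n = n*m := by
            have : n*(m-i) + n*i = n*((m-i)+i) := by ring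
            rw [mul_comm i n, this, Nat.sub_add_cancel (le_of_lt hi)]
          omega
        rw [Finset.prod_congr rfl hco]
        apply Finset.prod_lt_prod
        · intro i hi
          rw [Finset.mem_range] at hi
          have : 0 < m - i := by omega
          positivity
        · intro i hi
          exact Nat.le_succ _
        · exact ⟨0, Finset.mem_range.mpr (by omega), by omega⟩
      have hnm : n^m < Nat.factorial m * B.card := by
        have h2' : Nat.factorial m * n^m < Nat.factorial m * (Nat.factorial m * B.card) := by
          calc Nat.factorial m * n^m = n^m * Nat.factorial m := by ring
            _ < ∏ i ∈ Finset.range m, (n*m+1 - i*n) := hlt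
            _ ≤ (Nat.factorial m)^2 * B.card := hchain
            _ = Nat.factorial m * (Nat.factorial m * B.card) := by ring
        exact Nat.lt_of_mul_lt_mul_left h2'
      -- real-number contradiction
      have hceil : L ≤ (m:ℝ) * (Real.logb 2 (n:ℝ) - Real.logb 2 L) := by
        have hle := Int.le_ceil (L / (Real.logb 2 (n:ℝ) - Real.logb 2 L))
        rw [← hcdef, ← hmR] at hle
        rw [div_le_iff₀ hdenom] at hle
        linarith
      have hexp : (A.card:ℝ) * L^m ≤ (n:ℝ)^m := by
        have e1 : (n:ℝ)^m = (2:ℝ) ^ (Real.logb 2 (n:ℝ) * (m:ℝ)) := by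
          rw [Real.rpow_mul (by norm_num : (0:ℝ) ≤ 2), Real.rpow_logb (by norm_num)
            (by norm_num) hn0R, Real.rpow_natCast]
        have e2 : L^m = (2:ℝ) ^ (Real.logb 2 L * (m:ℝ)) := by
          rw [Real.rpow_mul (by norm_num : (0:ℝ) ≤ 2), Real.rpow_logb (by norm_num)
            (by norm_num) hL0, Real.rpow_natCast]
        have e3 : (A.card:ℝ) * L^m = (2:ℝ) ^ (L + Real.logb 2 L * (m:ℝ)) := by
          rw [Real.rpow_add (by norm_num : (0:ℝ) < 2), haL, ← e2]
        rw [e1, e3]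
        apply Real.rpow_le_rpow_of_exponent_le (by norm_num)
        have expand : (m:ℝ) * (Real.logb 2 (n:ℝ) - Real.logb 2 L)
            = (m:ℝ) * Real.logb 2 (n:ℝ) - (m:ℝ) * Real.logb 2 L := by ring
        rw [expand] at hceil
        linarith
      have hBa : (B.card:ℝ) ≤ (A.card:ℝ) := by
        exact_mod_cast Finset.card_le_card hB1
      have hB0 : (0:ℝ) ≤ (B.card:ℝ) := by positivity
      have hLpow : ((m:ℝ))^m ≤ L^m := pow_le_pow_left₀ (by positivity) hLm m
      have hfm : ((Nat.factorial m : ℕ):ℝ) ≤ ((m:ℝ))^m := by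
        exact_mod_cast Nat.factorial_le_pow m
      have hr1 : ((n:ℝ))^m < (Nat.factorial m : ℝ) * (B.card : ℝ) := by
        have := hnm
        push_cast
        exact_mod_cast this
      have hL0' : (0:ℝ) ≤ L := le_of_lt hL0
      have c1 : (Nat.factorial m : ℝ) * (B.card:ℝ) ≤ ((m:ℝ))^m * (B.card:ℝ) :=
        mul_le_mul_of_nonneg_right hfm hB0
      have c2 : ((m:ℝ))^m * (B.card:ℝ) ≤ L^m * (B.card:ℝ) :=
        mul_le_mul_of_nonneg_right hLpow hB0
      have c3 : L^m * (B.card:ℝ) ≤ L^m * (A.card:ℝ) :=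
        mul_le_mul_of_nonneg_left hBa (by positivity)
      have c4 : L^m * (A.card:ℝ) = (A.card:ℝ) * L^m := by ring
      linarith
    calc (Efin.card : ℝ) ≤ ((n * m * A.card : ℕ) : ℝ) := by exact_mod_cast hkey
      _ = (n:ℝ) * (m:ℝ) * (A.card:ℝ) := by push_cast; ring
      _ = (n:ℝ) * (c:ℝ) * (A.card:ℝ) := by rw [hmR]
  · -- floor case
    rw [min_eq_right hmin]
    set m : ℕ := fl.toNat with hmdef
    have hmZ : (m : ℤ) = fl := Int.toNat_of_nonneg (by omega)
    have hmR : (m : ℝ) = (fl : ℝ) := by exact_mod_cast congrArg (Int.cast : ℤ → ℝ) hmZ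
    have hm1 : 1 ≤ m := by omega
    have hkey : Efin.card ≤ n * m * A.card := by
      by_contra hgt
      push_neg at hgt
      have hDgt : 2 * (n*m) * A.card < (kwD A).card := by
        have hDE := kw_DtoE A
        rw [← hEdef] at hDE
        have e1 : 2 * (n*m) * A.card = 2 * (n*m*A.card) := by ring
        omega
      obtain ⟨B, hB1, hBne, hdB⟩ := kw_extract (n*m) A.card A le_rfl hDgt
      have hUB : ∀ x ∈ B, x ⊆ Finset.Icc 1 n ∧ x.card = k := fun x hx => hsub x (hB1 hx)
      have hdB' : ∀ x ∈ B, m*n+1 ≤ kwdeg B x := by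
        intro x hx
        have := hdB x hx
        have e : m*n = n*m := by ring
        omega
      have hsplit := kw_split_lb n k m B hBne hUB hdB'
      have hBa : B.card ≤ A.card := Finset.card_le_card hB1
      -- 2^(m+1) ≤ A.card but A.card = 2^L < 2^(m+1)
      have hup : (A.card : ℝ) < (2:ℝ)^((m:ℝ)+1) := by
        rw [← haL]
        apply Real.rpow_lt_rpow_of_exponent_lt (by norm_num)
        have := Int.lt_floor_add_one L
        rw [← hfldef] at this
        rw [hmR]
        linarith
      have hdown : (2:ℝ)^((m:ℝ)+1) ≤ (A.card:ℝ) := by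
        have e1 : (2:ℝ)^((m:ℝ)+1) = ((2^(m+1) : ℕ) : ℝ) := by
          rw [show ((m:ℝ)+1) = ((m+1 : ℕ) : ℝ) by push_cast; ring, Real.rpow_natCast]
          push_cast
          ring
        rw [e1]
        have : (2:ℕ)^(m+1) ≤ A.card := le_trans hsplit hBa
        exact_mod_cast this
      linarith
    calc (Efin.card : ℝ) ≤ ((n * m * A.card : ℕ) : ℝ) := by exact_mod_cast hkey
      _ = (n:ℝ) * (m:ℝ) * (A.card:ℝ) := by push_cast; ring
      _ = (n:ℝ) * (fl:ℝ) * (A.card:ℝ) := by rw [hmR]
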